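/- Let A and B be finite dimensional algebras over a field k. If M is an injective right A-module and N is an injective right B-module, then M ⊗_k N is an injective right (A ⊗_k B)-module. -/

import Mathlib

open TensorProduct

universe u

section Coind

variable (k : Type u) [Field k] (R : Type u) [Ring R] [Algebra k R]
variable (V : Type u) [AddCommGroup V] [Module k V]

/-- The coinduced module `Hom_k(R, V)` with `R`-action `(r • f) x = f (x * r)`. -/
def Coind : Type u := R →ₗ[k] V

namespace Coind

variable {k R V}

/-- Constructor. -/
def mk' (f : R →ₗ[k] V) : Coind k R V := f

/-- The underlying linear map. -/
def lin (f : Coind k R V) : R →ₗ[k] V := f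

instance : AddCommGroup (Coind k R V) := inferInstanceAs (AddCommGroup (R →ₗ[k] V))
instance : Module k (Coind k R V) := inferInstanceAs (Module k (R →ₗ[k] V))

@[simp] lemma lin_mk' (f : R →ₗ[k] V) : lin (mk' f : Coind k R V) = f := rfl

lemma lin_add (f g : Coind k R V) (x : R) : lin (f + g) x = lin f x + lin g x := rfl
lemma lin_zero (x : R) : lin (0 : Coind k R V) x = 0 := rfl
lemma lin_ksmul (c : k) (f : Coind k R V) (x : R) : lin (c • f) x = c • lin f x := rfl

@[ext] lemma ext {f g : Coind k R V} (h : ∀ x, lin f x = lin g x) : f = g :=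
  LinearMap.ext h

instance : SMul R (Coind k R V) :=
  ⟨fun r f => mk' ((lin f).comp (LinearMap.mulRight k r))⟩

lemma lin_smul (r : R) (f : Coind k R V) (x : R) : lin (r • f) x = lin f (x * r) := rfl

instance : Module R (Coind k R V) where
  one_smul f := ext fun x => by rw [lin_smul, mul_one]
  mul_smul r s f := ext fun x => by rw [lin_smul, lin_smul, lin_smul, mul_assoc]
  smul_zero r := ext fun x => rfl
  smul_add r f g := ext fun x => rfl
  add_smul r s f := ext fun x => by
    rw [lin_add, lin_smul, lin_smul, lin_smul, mul_add, map_add]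
  zero_smul f := ext fun x => by rw [lin_smul, mul_zero, map_zero, lin_zero]

instance : IsScalarTower k R (Coind k R V) :=
  ⟨fun c r f => ext fun x => by
    rw [lin_smul, lin_ksmul, lin_smul, mul_smul_comm, map_smul]⟩

/-- `Coind k R V` is `k`-linearly just `R →ₗ[k] V`. -/
def equiv : Coind k R V ≃ₗ[k] (R →ₗ[k] V) where
  toFun := lin
  invFun := mk'
  map_add' _ _ := rfl
  map_smul' _ _ := rfl
  left_inv _ := rfl
  right_inv _ := rfl

variable (k R V) in
/-- Coinduced modules are injective. -/
theorem injective_coind : Module.Injective R (Coind k R V) := by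
  constructor
  intro X Y _ _ _ _ i hi g
  letI : Module k X := Module.compHom X (algebraMap k R)
  letI : Module k Y := Module.compHom Y (algebraMap k R)
  haveI tX : IsScalarTower k R X := ⟨fun c r x => by
    rw [Algebra.smul_def, mul_smul]; rfl⟩
  haveI tY : IsScalarTower k R Y := ⟨fun c r y => by
    rw [Algebra.smul_def, mul_smul]; rfl⟩
  -- the `k`-linear map `x ↦ g x 1`
  let φ : X →ₗ[k] V :=
  { toFun := fun x => lin (g x) 1
    map_add' := fun x y => by
      show lin (g (x + y)) 1 = lin (g x) 1 + lin (g y) 1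
      rw [map_add, lin_add]
    map_smul' := fun c x => by
      show lin (g (algebraMap k R c • x)) 1 = c • lin (g x) 1
      rw [map_smul, lin_smul, one_mul, Algebra.algebraMap_eq_smul_one, map_smul] }
  obtain ⟨L, hL⟩ := (i.restrictScalars k).exists_leftInverse_of_injective
    (by rw [LinearMap.ker_eq_bot]; exact hi)
  let ψ : Y →ₗ[k] V := φ.comp L
  have hψ : ∀ x : X, ψ (i x) = φ x := fun x => by
    have h1 : L (i x) = x := by
      have := LinearMap.congr_fun hL x
      simpa using this
    show φ (L (i x)) = φ x
    rw [h1]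
  let F : Y →ₗ[R] Coind k R V :=
  { toFun := fun y => mk'
      { toFun := fun a => ψ (a • y)
        map_add' := fun a b => by
          show ψ ((a + b) • y) = ψ (a • y) + ψ (b • y)
          rw [add_smul, map_add]
        map_smul' := fun c a => by
          show ψ ((c • a) • y) = c • ψ (a • y)
          rw [smul_assoc, map_smul] }
    map_add' := fun y z => ext fun x => by
      show ψ (x • (y + z)) = ψ (x • y) + ψ (x • z)
      rw [smul_add, map_add]
    map_smul' := fun r y => ext fun x => by
      show ψ (x • (r • y)) = ψ ((x * r) • y)
      rw [mul_smul] }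
  refine ⟨F, fun x => ext fun a => ?_⟩
  show ψ (a • i x) = lin (g x) a
  rw [← map_smul, hψ]
  show lin (g (a • x)) 1 = lin (g x) a
  rw [map_smul, lin_smul, one_mul]

end Coind

variable {k R V} in
/-- The canonical embedding of a module into its coinduced module. -/
def coindEmb [Module R V] [IsScalarTower k R V] : V →ₗ[R] Coind k R V where
  toFun v := Coind.mk'
    { toFun := fun r => r • v
      map_add' := fun a b => add_smul a b v
      map_smul' := fun c a => smul_assoc c a v }
  map_add' v w := Coind.ext fun x => smul_add x v w
  map_smul' r v := Coind.ext fun x => by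
    show x • (r • v) = Coind.lin (r • _) x
    rw [Coind.lin_smul]
    show x • r • v = (x * r) • v
    rw [mul_smul]

variable {k R V} in
lemma coindEmb_injective [Module R V] [IsScalarTower k R V] :
    Function.Injective (coindEmb (k := k) (R := R) (V := V)) := by
  intro v w h
  have : (1 : R) • v = (1 : R) • w := congrArg (fun f => Coind.lin f 1) h
  simpa using this

end Coind

set_option maxHeartbeats 1000000 in
/-- If `M` is a injective right `A`-module and `N` is a injective right
`B`-module over finite dimensional `k`-algebras `A` and `B`, then `M ⊗_k N` is a
injective `(A ⊗_k B)`-module, where the action is given by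
`(m ⊗ n) • (a ⊗ b) = (ma ⊗ nb)`. -/
theorem tensor_injective
    (k : Type u) [Field k] (A B : Type u) [Ring A] [Ring B]
    [Algebra k A] [Algebra k B] [FiniteDimensional k A] [FiniteDimensional k B]
    (M N : Type u) [AddCommGroup M] [Module k M] [Module A M] [IsScalarTower k A M]
    [AddCommGroup N] [Module k N] [Module B N] [IsScalarTower k B N]
    [Module (A ⊗[k] B) (M ⊗[k] N)]
    (hsmul : ∀ (a : A) (b : B) (m : M) (n : N),
      (a ⊗ₜ[k] b) • (m ⊗ₜ[k] n) = (a • m) ⊗ₜ[k] (b • n))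
    (hM : Module.Injective A M) (hN : Module.Injective B N) :
    Module.Injective (A ⊗[k] B) (M ⊗[k] N) := by
  classical
  -- the action of `A ⊗ B` on `M ⊗ N` is `k`-bilinear
  have hks : ∀ (c : k) (r : A ⊗[k] B) (z : M ⊗[k] N), (c • r) • z = c • (r • z) := by
    intro c r z
    induction r using TensorProduct.induction_on with
    | zero => rw [smul_zero, zero_smul, smul_zero]
    | tmul a b =>
      induction z using TensorProduct.induction_on with
      | zero => rw [smul_zero, smul_zero, smul_zero]
      | tmul m n =>
        rw [show c • (a ⊗ₜ[k] b) = (c • a) ⊗ₜ[k] b from smul_tmul' c a b,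
          hsmul, hsmul, smul_assoc]
        exact (smul_tmul' c (a • m) (b • n)).symm
      | add z1 z2 h1 h2 => rw [smul_add, smul_add, h1, h2, smul_add]
    | add r1 r2 h1 h2 => rw [smul_add, add_smul, add_smul, h1, h2, smul_add]
  -- retractions from the coinduced modules
  obtain ⟨rM, hrM⟩ := hM.out (coindEmb (k := k) (R := A) (V := M)) coindEmb_injective
    LinearMap.id
  obtain ⟨rN, hrN⟩ := hN.out (coindEmb (k := k) (R := B) (V := N)) coindEmb_injective
    LinearMap.id
  let rMk : Coind k A M →ₗ[k] M := rM.restrictScalars k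
  let rNk : Coind k B N →ₗ[k] N := rN.restrictScalars k
  -- the embedding of `M ⊗ N` into its coinduced module
  let J : M ⊗[k] N →ₗ[A ⊗[k] B] Coind k (A ⊗[k] B) (M ⊗[k] N) :=
  { toFun := fun z => Coind.mk'
      { toFun := fun r => r • z
        map_add' := fun r s => add_smul r s z
        map_smul' := fun c r => hks c r z }
    map_add' := fun z w => Coind.ext fun x => smul_add x z w
    map_smul' := fun r z => Coind.ext fun x => by
      show x • (r • z) = Coind.lin (r • _) x
      rw [Coind.lin_smul]
      show x • r • z = (x * r) • z
      rw [mul_smul] }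
  have hJ : ∀ (z : M ⊗[k] N) (x : A ⊗[k] B), Coind.lin (J z) x = x • z := fun z x => rfl
  -- the hom-tensor equivalence
  let hTHe := homTensorHomEquiv k A B M N
  let cgr := TensorProduct.congr
    (Coind.equiv (k := k) (R := A) (V := M)) (Coind.equiv (k := k) (R := B) (V := N))
  let Φ : Coind k A M ⊗[k] Coind k B N →ₗ[k] Coind k (A ⊗[k] B) (M ⊗[k] N) :=
    ((Coind.equiv (k := k) (R := A ⊗[k] B) (V := M ⊗[k] N)).symm.toLinearMap.comp
      hTHe.toLinearMap).comp cgr.toLinearMap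
  have hΦ0 : ∀ f, Φ (cgr.symm (hTHe.symm (Coind.equiv f))) = f := by
    intro f
    simp only [Φ, LinearMap.coe_comp, Function.comp_apply, LinearEquiv.coe_coe,
      LinearEquiv.apply_symm_apply, LinearEquiv.symm_apply_apply]
  have hΦ : Function.Surjective Φ := fun f => ⟨cgr.symm (hTHe.symm (Coind.equiv f)), hΦ0 f⟩
  have hΦlin : ∀ t, Coind.lin (Φ t) = TensorProduct.homTensorHomMap (.id k) A B M N (cgr t) := by
    intro t
    show Coind.equiv (Φ t) = _
    simp only [Φ, LinearMap.coe_comp, Function.comp_apply, LinearEquiv.coe_coe,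
      LinearEquiv.apply_symm_apply]
    exact homTensorHomEquiv_apply (cgr t)
  -- key equivariance
  have key : ∀ (c : A ⊗[k] B) (t : Coind k A M ⊗[k] Coind k B N),
      TensorProduct.map rMk rNk ((cgr.symm (hTHe.symm (Coind.equiv (c • Φ t)))))
        = c • TensorProduct.map rMk rNk t := by
    intro c t
    induction c using TensorProduct.induction_on with
    | zero => simp only [zero_smul, map_zero]
    | add c1 c2 h1 h2 => simp only [add_smul, map_add, h1, h2]
    | tmul a b =>
      induction t using TensorProduct.induction_on with
      | zero => simp only [map_zero, smul_zero]
      | add t1 t2 h1 h2 => simp only [map_add, smul_add, h1, h2]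
      | tmul φ ψ =>
        have core : Coind.equiv ((a ⊗ₜ[k] b) • Φ (φ ⊗ₜ[k] ψ))
            = hTHe (cgr ((a • φ) ⊗ₜ[k] (b • ψ))) := by
          apply TensorProduct.ext'
          intro a' b'
          show Coind.lin ((a ⊗ₜ[k] b) • Φ (φ ⊗ₜ[k] ψ)) (a' ⊗ₜ[k] b') = _
          rw [Coind.lin_smul, Algebra.TensorProduct.tmul_mul_tmul, hΦlin,
            homTensorHomEquiv_apply]
          simp only [cgr, TensorProduct.congr_tmul, TensorProduct.homTensorHomMap_apply,
            TensorProduct.map_tmul]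
          rfl
        rw [core]
        simp only [LinearEquiv.symm_apply_apply, TensorProduct.map_tmul, hsmul]
        show rM (a • φ) ⊗ₜ[k] rN (b • ψ) = (a • rM φ) ⊗ₜ[k] (b • rN ψ)
        rw [LinearMap.map_smul, LinearMap.map_smul]
  -- the retraction
  let r : Coind k (A ⊗[k] B) (M ⊗[k] N) →ₗ[A ⊗[k] B] M ⊗[k] N :=
  { toFun := fun f => TensorProduct.map rMk rNk (cgr.symm (hTHe.symm (Coind.equiv f)))
    map_add' := fun f g => by simp only [map_add]
    map_smul' := fun c f => by
      obtain ⟨t, rfl⟩ := hΦ f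
      have h2 : cgr.symm (hTHe.symm (Coind.equiv (Φ t))) = t := by
        simp only [Φ, LinearMap.coe_comp, Function.comp_apply, LinearEquiv.coe_coe,
          LinearEquiv.symm_apply_apply, LinearEquiv.apply_symm_apply]
      show TensorProduct.map rMk rNk (cgr.symm (hTHe.symm (Coind.equiv (c • Φ t))))
        = c • TensorProduct.map rMk rNk (cgr.symm (hTHe.symm (Coind.equiv (Φ t))))
      rw [key c t, h2] }
  have hret : ∀ z, r (J z) = z := by
    intro z
    induction z using TensorProduct.induction_on with
    | zero => rw [map_zero, map_zero]
    | add z1 z2 h1 h2 => rw [map_add, map_add, h1, h2]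
    | tmul m n =>
      have core : Coind.equiv (J (m ⊗ₜ[k] n))
          = hTHe (cgr (coindEmb m ⊗ₜ[k] coindEmb n)) := by
        apply TensorProduct.ext'
        intro a b
        show Coind.lin (J (m ⊗ₜ[k] n)) (a ⊗ₜ[k] b) = _
        rw [hJ, hsmul, homTensorHomEquiv_apply]
        simp only [cgr, TensorProduct.congr_tmul, TensorProduct.homTensorHomMap_apply,
          TensorProduct.map_tmul]
        rfl
      show TensorProduct.map rMk rNk
          (cgr.symm (hTHe.symm (Coind.equiv (J (m ⊗ₜ[k] n))))) = m ⊗ₜ[k] n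
      rw [core]
      simp only [LinearEquiv.symm_apply_apply, TensorProduct.map_tmul]
      show rM (coindEmb m) ⊗ₜ[k] rN (coindEmb n) = m ⊗ₜ[k] n
      rw [hrM, hrN]
      rfl
  constructor
  intro X Y _ _ _ _ i hi f
  obtain ⟨G, hG⟩ := (Coind.injective_coind k (A ⊗[k] B) (M ⊗[k] N)).out i hi (J.comp f)
  refine ⟨r.comp G, fun x => ?_⟩
  have := hG x
  simp only [LinearMap.comp_apply] at this ⊢
  rw [this, hret]
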